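/- For a triangle functor F : A → B, if F is objective then the induced functor F̃ : A/Ker(F) → B from the Verdier quotient by the kernel-on-objects subcategory is faithful. -/

import Mathlib

open CategoryTheory CategoryTheory.Limits CategoryTheory.Pretriangulated

universe v₁ v₂ u₁ u₂

variable {A : Type u₁} {B : Type u₂} [Category.{v₁} A] [Category.{v₂} B]
  [Preadditive A] [Preadditive B] [HasZeroObject A] [HasZeroObject B]
  [HasShift A ℤ] [HasShift B ℤ]
  [∀ n : ℤ, (shiftFunctor A n).Additive] [∀ n : ℤ, (shiftFunctor B n).Additive]
  [Pretriangulated A] [Pretriangulated B] [IsTriangulated A] [IsTriangulated B]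


/-- If a triangle functor `F` is objective, then the induced functor
`F̃ : A/Ker F ⟶ B` on the Verdier quotient by the subcategory of objects killed
by `F` is faithful. -/
theorem stmt9 (F : A ⥤ B) [F.CommShift ℤ] [F.IsTriangulated]
    (S : ObjectProperty A) [S.IsTriangulated] (hS : ∀ X : A, S X ↔ IsZero (F.obj X))
    (Ft : S.trW.Localization ⥤ B) (e : S.trW.Q ⋙ Ft ≅ F)
    (hobj : ∀ (X Y : A) (f : X ⟶ Y), F.map f = 0 →
      ∃ (K : A) (g : X ⟶ K) (h : K ⟶ Y), IsZero (F.obj K) ∧ f = g ≫ h) :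
    Ft.Faithful := by
  have hFt : Ft.Additive := by
    rw [Localization.functor_additive_iff S.trW.Q S.trW Ft]
    exact Functor.additive_of_iso e.symm
  have key : ∀ (X Y : A) (f : S.trW.Q.obj X ⟶ S.trW.Q.obj Y), Ft.map f = 0 → f = 0 := by
    intro X Y f hf
    obtain ⟨φ, rfl⟩ := Localization.exists_leftFraction S.trW.Q S.trW f
    have hs := Localization.inverts S.trW.Q S.trW φ.s φ.hs
    suffices h1 : S.trW.Q.map φ.f = 0 by
      rw [← cancel_mono (S.trW.Q.map φ.s), φ.map_comp_map_s, h1, zero_comp]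
    -- first, F.map φ.f = 0
    have h2 : F.map φ.f = 0 := by
      have h3 : Ft.map (S.trW.Q.map φ.f) = 0 := by
        rw [← φ.map_comp_map_s S.trW.Q (Localization.inverts S.trW.Q S.trW),
          Functor.map_comp, hf, zero_comp]
      have h4 := e.hom.naturality φ.f
      simp only [Functor.comp_map] at h4
      rw [← cancel_epi (e.hom.app X), ← h4, h3, zero_comp, comp_zero]
    obtain ⟨K, g, h, hK, hfac⟩ := hobj X φ.Y' φ.f h2
    -- Q.obj K is zero
    have hPK : S K := (hS K).2 hK
    have hw : S.trW ((contractibleTriangle K).rotate.mor₁) :=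
      ObjectProperty.trW.mk S
        (rot_of_distTriang _ (contractible_distinguished K)) (S.le_shift 1 K hPK)
    have hiso : IsIso (S.trW.Q.map ((contractibleTriangle K).rotate.mor₁)) :=
      Localization.inverts S.trW.Q S.trW _ hw
    have hm : (contractibleTriangle K).rotate.mor₁ = 0 := rfl
    rw [hm, Functor.map_zero] at hiso
    have hzero : IsZero (S.trW.Q.obj K) := by
      rw [IsZero.iff_id_eq_zero]; exact (@IsIso.hom_inv_id _ _ _ _ _ hiso).symm.trans zero_comp
    rw [hfac, Functor.map_comp, hzero.eq_of_tgt (S.trW.Q.map g) 0, zero_comp]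
  have := Localization.essSurj S.trW.Q S.trW
  refine ⟨fun {X Y} f g hfg => ?_⟩
  have h5 : Ft.map ((S.trW.Q.objObjPreimageIso X).hom ≫ (f - g) ≫
      (S.trW.Q.objObjPreimageIso Y).inv) = 0 := by
    simp [hfg]
  have h6 := key _ _ _ h5
  have h7 : f - g = 0 := by
    rw [← cancel_epi (S.trW.Q.objObjPreimageIso X).hom,
      ← cancel_mono (S.trW.Q.objObjPreimageIso Y).inv]
    simpa using h6
  exact sub_eq_zero.1 h7
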